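/- Let N ≥ 2 and define μ_N(x) = 1 / (V_N (1 + |x|^(N/(N-1)))^N) for x ∈ ℝ^N, where V_N is the volume of the unit ball in ℝ^N. Then ∫_{ℝ^N} μ_N(x) dx = 1, i.e. μ_N is a probability density on ℝ^N. -/

import Mathlib

open MeasureTheory

open MeasureTheory Set Filter Real Topology

lemma key_deriv (N : ℕ) (hN : 2 ≤ N) {y : ℝ} (hy : 0 < y) :
    HasDerivAt (fun y : ℝ => (y ^ ((N:ℝ)/((N:ℝ)-1)) / (1 + y ^ ((N:ℝ)/((N:ℝ)-1)))) ^ (N-1))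
      ((N:ℝ) * y ^ (N-1) / (1 + y ^ ((N:ℝ)/((N:ℝ)-1))) ^ N) y := by
  set p : ℝ := (N:ℝ)/((N:ℝ)-1) with hp
  have h2 : (2:ℝ) ≤ (N:ℝ) := by exact_mod_cast hN
  have hN1 : (0:ℝ) < (N:ℝ) - 1 := by linarith
  have hppos : 0 < p := by
    rw [hp]; exact div_pos (by linarith) hN1
  have hu : HasDerivAt (fun y : ℝ => y ^ p) (p * y ^ (p - 1)) y :=
    Real.hasDerivAt_rpow_const (Or.inl hy.ne')
  have hpos : 0 < 1 + y ^ p := by positivity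
  have hw : HasDerivAt (fun y : ℝ => y ^ p / (1 + y ^ p))
      ((p * y ^ (p-1) * (1 + y ^ p) - y ^ p * (p * y ^ (p-1))) / (1 + y ^ p) ^ 2) y :=
    hu.div (hu.const_add 1) hpos.ne'
  have h := hw.pow (N-1)
  refine HasDerivAt.congr_deriv h ?_
  symm
  have e1 : (p * y ^ (p-1) * (1 + y ^ p) - y ^ p * (p * y ^ (p-1))) = p * y ^ (p-1) := by ring
  have hidx : N - 1 - 1 = N - 2 := by omega
  have hNN : N - 2 + 2 = N := by omega
  have hc1 : ((N-1 : ℕ) : ℝ) = (N:ℝ) - 1 := by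
    rw [Nat.cast_sub (by omega)]; simp
  have hc2 : ((N-2 : ℕ) : ℝ) = (N:ℝ) - 2 := by
    rw [Nat.cast_sub (by omega)]; simp
  have e2 : (y ^ p) ^ (N-2) = y ^ (p * ((N:ℝ)-2)) := by
    rw [← Real.rpow_natCast (y ^ p) (N-2), ← Real.rpow_mul hy.le, hc2]
  have e3 : ((N:ℝ)-1) * p = N := by
    rw [hp]; field_simp
  have num : (N:ℝ) * y ^ (N-1) = ((N-1:ℕ):ℝ) * (y ^ p) ^ (N-2) * (p * y ^ (p-1)) := by
    rw [e2, hc1, ← Real.rpow_natCast y (N-1), hc1]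
    have h5 : ((N:ℝ)-1) * (y ^ (p * ((N:ℝ)-2))) * (p * y ^ (p-1))
        = ((N:ℝ)-1) * p * (y ^ (p * ((N:ℝ)-2)) * y ^ (p-1)) := by ring
    rw [h5, ← Real.rpow_add hy, e3]
    have h4 : p * ((N:ℝ)-2) + (p-1) = ((N:ℝ)-1) * p - 1 := by ring
    rw [h4, e3]
  have hNpow : (1 + y ^ p) ^ N = (1 + y ^ p) ^ (N-2) * (1 + y ^ p) ^ 2 := by
    rw [← pow_add, hNN]
  rw [e1, hidx, div_pow, num, hNpow]
  field_simp

lemma key_int (N : ℕ) (hN : 2 ≤ N) :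
    ∫ y in Ioi (0:ℝ), (N:ℝ) * y ^ (N-1) / (1 + y ^ ((N:ℝ)/((N:ℝ)-1))) ^ N = 1 := by
  set p : ℝ := (N:ℝ)/((N:ℝ)-1) with hp
  have h2 : (2:ℝ) ≤ (N:ℝ) := by exact_mod_cast hN
  have hN1 : (0:ℝ) < (N:ℝ) - 1 := by linarith
  have hppos : 0 < p := by rw [hp]; exact div_pos (by linarith) hN1
  set H : ℝ → ℝ := fun y => (y ^ p / (1 + y ^ p)) ^ (N-1) with hH
  have hcont : ContinuousWithinAt H (Ici 0) 0 := by
    have c1 : ContinuousAt (fun y : ℝ => y ^ p) 0 :=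
      Real.continuousAt_rpow_const 0 p (Or.inr hppos.le)
    have c2 : ContinuousAt (fun y : ℝ => y ^ p / (1 + y ^ p)) 0 :=
      c1.div (continuousAt_const.add c1) (by simp [Real.zero_rpow hppos.ne'])
    exact (c2.pow (N-1)).continuousWithinAt
  have hderiv : ∀ y ∈ Ioi (0:ℝ), HasDerivAt H
      ((N:ℝ) * y ^ (N-1) / (1 + y ^ p) ^ N) y := fun y hy => key_deriv N hN hy
  have hnonneg : ∀ y ∈ Ioi (0:ℝ), 0 ≤ (N:ℝ) * y ^ (N-1) / (1 + y ^ p) ^ N := by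
    intro y hy
    have hy' : (0:ℝ) < y := hy
    have : (0:ℝ) < 1 + y ^ p := by positivity
    positivity
  have htend : Tendsto H atTop (𝓝 1) := by
    have t1 : Tendsto (fun y : ℝ => y ^ p) atTop atTop := tendsto_rpow_atTop hppos
    have t2 : Tendsto (fun y : ℝ => 1 + y ^ p) atTop atTop :=
      tendsto_atTop_add_const_left _ 1 t1
    have t3 : Tendsto (fun y : ℝ => (1 + y ^ p)⁻¹) atTop (𝓝 0) :=
      t2.inv_tendsto_atTop
    have t4 : Tendsto (fun y : ℝ => y ^ p / (1 + y ^ p)) atTop (𝓝 1) := by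
      have t5 : Tendsto (fun y : ℝ => 1 - (1 + y ^ p)⁻¹) atTop (𝓝 1) := by
        simpa using tendsto_const_nhds.sub t3
      refine t5.congr' ?_
      filter_upwards [eventually_gt_atTop (0:ℝ)] with y hy
      have hpos : (0:ℝ) < 1 + y ^ p := by positivity
      field_simp
      ring
    simpa using t4.pow (N-1)
  have h := integral_Ioi_of_hasDerivAt_of_nonneg hcont hderiv hnonneg htend
  rw [h, hH]
  simp [Real.zero_rpow hppos.ne', zero_pow (by omega : N - 1 ≠ 0)]


/-- For `N ≥ 2`, `μ_N(x) = 1/(V_N (1 + |x|^(N/(N-1)))^N)` is a probability density on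
`ℝ^N`, where `V_N` is the volume of the unit ball. -/
theorem stmt9 (N : ℕ) (hN : 2 ≤ N) :
    ∫ x : EuclideanSpace ℝ (Fin N),
      1 / ((volume (Metric.ball (0 : EuclideanSpace ℝ (Fin N)) 1)).toReal *
        (1 + ‖x‖ ^ ((N : ℝ) / ((N : ℝ) - 1))) ^ N) = 1 := by
  haveI : Nonempty (Fin N) := ⟨⟨0, by omega⟩⟩
  haveI : Nontrivial (EuclideanSpace ℝ (Fin N)) := inferInstance
  set V : ℝ := (volume (Metric.ball (0 : EuclideanSpace ℝ (Fin N)) 1)).toReal with hV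
  have hVpos : 0 < V := by
    rw [hV]
    exact ENNReal.toReal_pos (Metric.measure_ball_pos volume 0 one_pos).ne'
      measure_ball_lt_top.ne
  have hNpos : (0:ℝ) < N := by positivity
  rw [integral_fun_norm_addHaar volume
    (fun t : ℝ => 1 / (V * (1 + t ^ ((N:ℝ)/((N:ℝ)-1))) ^ N))]
  rw [finrank_euclideanSpace_fin]
  have e : ∀ y ∈ Ioi (0:ℝ),
      y ^ (N-1) • (1 / (V * (1 + y ^ ((N:ℝ)/((N:ℝ)-1))) ^ N))
      = (1/((N:ℝ)*V)) * ((N:ℝ) * y ^ (N-1) / (1 + y ^ ((N:ℝ)/((N:ℝ)-1))) ^ N) := by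
    intro y hy
    have hy' : (0:ℝ) < y := hy
    have hpos : (0:ℝ) < 1 + y ^ ((N:ℝ)/((N:ℝ)-1)) := by positivity
    rw [smul_eq_mul]
    field_simp
  rw [setIntegral_congr_fun measurableSet_Ioi e, integral_const_mul, key_int N hN]
  rw [nsmul_eq_mul, smul_eq_mul, measureReal_def, ← hV]
  field_simp
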